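/- Let ε₁, ε₂, γ₁, γ₂ > 0 and let N₁, N₂ : ℝ → ℝ be differentiable positive functions satisfying the Volterra predator-prey system N₁' = N₁(ε₁ − γ₁ N₂), N₂' = −N₂(ε₂ − γ₂ N₁), and suppose the solution is periodic with period T > 0. Then the time average of the predator over one period equals the equilibrium value: (1/T) ∫₀ᵀ N₂(t) dt = ε₁/γ₁. -/

import Mathlib

/-- The time average of the predator over one period of a periodic solution of
the Volterra predator-prey system equals the equilibrium value ε₁/γ₁. -/
theorem volterra_predator_average (ε₁ ε₂ γ₁ γ₂ T : ℝ)
    (hε₁ : 0 < ε₁) (hε₂ : 0 < ε₂) (hγ₁ : 0 < γ₁) (hγ₂ : 0 < γ₂) (hT : 0 < T)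
    (N₁ N₂ : ℝ → ℝ) (hpos₁ : ∀ t, 0 < N₁ t) (hpos₂ : ∀ t, 0 < N₂ t)
    (hode₁ : ∀ t, HasDerivAt N₁ (N₁ t * (ε₁ - γ₁ * N₂ t)) t)
    (hode₂ : ∀ t, HasDerivAt N₂ (-(N₂ t) * (ε₂ - γ₂ * N₁ t)) t)
    (hper₁ : ∀ t, N₁ (t + T) = N₁ t) (hper₂ : ∀ t, N₂ (t + T) = N₂ t) :
    (1 / T) * ∫ t in (0 : ℝ)..T, N₂ t = ε₁ / γ₁ := by
  have hcont₂ : Continuous N₂ := by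
    have : Differentiable ℝ N₂ := fun t => (hode₂ t).differentiableAt
    exact this.continuous
  have hlog : ∀ t, HasDerivAt (fun s => Real.log (N₁ s)) (ε₁ - γ₁ * N₂ t) t := by
    intro t
    have h := (hode₁ t).log (hpos₁ t).ne'
    have : N₁ t * (ε₁ - γ₁ * N₂ t) / N₁ t = ε₁ - γ₁ * N₂ t := by
      rw [mul_comm, mul_div_assoc, div_self (hpos₁ t).ne', mul_one]
    rwa [this] at h
  have hint : ∫ t in (0:ℝ)..T, (ε₁ - γ₁ * N₂ t) = Real.log (N₁ T) - Real.log (N₁ 0) := by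
    apply intervalIntegral.integral_eq_sub_of_hasDerivAt (fun t _ => hlog t)
    exact ((continuous_const.sub (continuous_const.mul hcont₂)).intervalIntegrable 0 T)
  have hTeq : N₁ T = N₁ 0 := by simpa using hper₁ 0
  rw [hTeq, sub_self] at hint
  have hsplit : ∫ t in (0:ℝ)..T, (ε₁ - γ₁ * N₂ t)
      = ε₁ * T - γ₁ * ∫ t in (0:ℝ)..T, N₂ t := by
    rw [intervalIntegral.integral_sub (g := fun t => γ₁ * N₂ t) (intervalIntegrable_const)
      ((continuous_const.mul hcont₂).intervalIntegrable 0 T),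
      intervalIntegral.integral_const, intervalIntegral.integral_const_mul]
    simp [smul_eq_mul]; ring
  rw [hsplit] at hint
  have : γ₁ * ∫ t in (0:ℝ)..T, N₂ t = ε₁ * T := by linarith
  field_simp
  linarith
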